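/- arXiv:2510.03791 — 16 statements merged into one kernel-verified Lean document; each statement's English description precedes it below -/
import Mathlib

section
/- Every multiplication A-module E is an annihilator multiplication module. -/
/-- An `A`-module `E` is an *annihilator multiplication module* if for every `e ∈ E`
there exists a finitely generated ideal `I` of `A` such that `ann(e) = ann(IE)`. -/
def IsAnnMultiplication (A : Type*) [CommRing A] (E : Type*) [AddCommGroup E]
    [Module A E] : Prop :=
  ∀ e : E, ∃ I : Ideal A, I.FG ∧
    (Submodule.span A {e}).annihilator = (I • (⊤ : Submodule A E)).annihilator

/-- Every multiplication module is an annihilator multiplication module. -/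
theorem multiplication_isAnnMultiplication {A : Type*} [CommRing A] [Nontrivial A]
    {E : Type*} [AddCommGroup E] [Module A E] [Nontrivial E]
    (hmul : ∀ V : Submodule A E, ∃ I : Ideal A, V = I • (⊤ : Submodule A E)) :
    IsAnnMultiplication A E := by
  intro e
  obtain ⟨I, hI⟩ := hmul (Submodule.span A {e})
  have he : e ∈ I • (⊤ : Submodule A E) := by
    rw [← hI]; exact Submodule.mem_span_singleton_self e
  have key : ∃ J : Ideal A, J.FG ∧ J ≤ I ∧ e ∈ J • (⊤ : Submodule A E) := by
    refine Submodule.smul_induction_on he ?_ ?_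
    · intro a ha x hx
      refine ⟨Ideal.span {a}, Submodule.fg_span_singleton a, ?_, ?_⟩
      · rwa [Ideal.span_singleton_le_iff_mem]
      · exact Submodule.smul_mem_smul (Submodule.mem_span_singleton_self a) trivial
    · rintro x y ⟨J₁, h₁, hle₁, hx⟩ ⟨J₂, h₂, hle₂, hy⟩
      exact ⟨J₁ ⊔ J₂, Submodule.FG.sup h₁ h₂, sup_le hle₁ hle₂,
        Submodule.add_mem _ (Submodule.smul_mono_left le_sup_left hx)
          (Submodule.smul_mono_left le_sup_right hy)⟩
  obtain ⟨J, hJfg, hJle, heJ⟩ := key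
  refine ⟨J, hJfg, ?_⟩
  have h1 : Submodule.span A {e} ≤ J • (⊤ : Submodule A E) :=
    Submodule.span_le.2 (by simpa using heJ)
  have h2 : J • (⊤ : Submodule A E) ≤ Submodule.span A {e} := by
    rw [hI]; exact Submodule.smul_mono_left hJle
  rw [le_antisymm h1 h2]
end

section
/- If E is an annihilator multiplication A-module and V is a finitely generated submodule of E, then there exists a finitely generated ideal I of A such that ann(V) = ann(IE). -/
lemma annihilator_sup' {A : Type*} [CommRing A] {E : Type*} [AddCommGroup E] [Module A E]
    (V W : Submodule A E) :
    (V ⊔ W).annihilator = V.annihilator ⊓ W.annihilator := by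
  apply le_antisymm
  · exact le_inf (Submodule.annihilator_mono le_sup_left)
      (Submodule.annihilator_mono le_sup_right)
  · intro a ha
    rw [Submodule.mem_annihilator]
    intro n hn
    obtain ⟨x, hx, y, hy, rfl⟩ := Submodule.mem_sup.mp hn
    rw [smul_add, Submodule.mem_annihilator.mp ha.1 x hx,
      Submodule.mem_annihilator.mp ha.2 y hy, add_zero]

/-- If `E` is an annihilator multiplication module and `V` is a finitely generated
submodule of `E`, then there is a finitely generated ideal `I` with `ann(V) = ann(IE)`. -/
theorem annihilator_eq_of_fg {A : Type*} [CommRing A] [Nontrivial A]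
    {E : Type*} [AddCommGroup E] [Module A E] [Nontrivial E]
    (hE : IsAnnMultiplication A E) (V : Submodule A E) (hV : V.FG) :
    ∃ I : Ideal A, I.FG ∧ V.annihilator = (I • (⊤ : Submodule A E)).annihilator := by
  refine Submodule.fg_induction (motive := fun V _ => ∃ I : Ideal A, I.FG ∧ V.annihilator = (I • (⊤ : Submodule A E)).annihilator) (fun x => hE x) ?_ V hV
  intro V W _ _ hV hW
  obtain ⟨I, hIfg, hI⟩ := hV
  obtain ⟨J, hJfg, hJ⟩ := hW
  refine ⟨I ⊔ J, Submodule.FG.sup hIfg hJfg, ?_⟩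
  rw [annihilator_sup', hI, hJ, Submodule.sup_smul, annihilator_sup']
end

section
/- If E is an annihilator multiplication A-module and V is any submodule of E (not necessarily finitely generated), then there exists an ideal I of A such that ann(V) = ann(IE). -/
lemma iSup_smul_top {A : Type*} [CommRing A] {E : Type*} [AddCommGroup E] [Module A E]
    {ι : Sort*} (I : ι → Ideal A) :
    (⨆ i, I i) • (⊤ : Submodule A E) = ⨆ i, (I i • (⊤ : Submodule A E)) := by
  apply le_antisymm
  · rw [Submodule.smul_le]
    intro r hr n _
    induction hr using Submodule.iSup_induction' with
    | mem i x hx =>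
        exact le_iSup (fun i => I i • (⊤ : Submodule A E)) i
          (Submodule.smul_mem_smul hx trivial)
    | zero => simp
    | add x y _ _ hx hy => simpa [add_smul] using Submodule.add_mem _ hx hy
  · exact iSup_le fun i => Submodule.smul_mono_left (le_iSup I i)

/-- If `E` is an annihilator multiplication module and `V` is any submodule of `E`,
then there is an ideal `I` of `A` with `ann(V) = ann(IE)`. -/
theorem annihilator_eq_of_submodule {A : Type*} [CommRing A] [Nontrivial A]
    {E : Type*} [AddCommGroup E] [Module A E] [Nontrivial E]
    (hE : IsAnnMultiplication A E) (V : Submodule A E) :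
    ∃ I : Ideal A, V.annihilator = (I • (⊤ : Submodule A E)).annihilator := by
  choose I hIfg hI using hE
  refine ⟨⨆ e : V, I e, ?_⟩
  have hV : V = ⨆ e : V, Submodule.span A {(e : E)} := by
    apply le_antisymm
    · intro x hx
      exact le_iSup (fun e : V => Submodule.span A {(e : E)}) ⟨x, hx⟩
        (Submodule.mem_span_singleton_self x)
    · exact iSup_le fun e => (Submodule.span_singleton_le_iff_mem _ _).mpr e.2
  calc V.annihilator = (⨆ e : V, Submodule.span A {(e : E)}).annihilator := by rw [← hV]
    _ = ⨅ e : V, (Submodule.span A {(e : E)}).annihilator := Submodule.annihilator_iSup _ _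
    _ = ⨅ e : V, (I (e : E) • (⊤ : Submodule A E)).annihilator := iInf_congr fun e => hI (e : E)
    _ = (⨆ e : V, I (e : E) • (⊤ : Submodule A E)).annihilator :=
        (Submodule.annihilator_iSup _ _).symm
    _ = ((⨆ e : V, I (e : E)) • (⊤ : Submodule A E)).annihilator := by rw [iSup_smul_top]
end

section
/- Let n ≥ 1, let A_i be a commutative ring and E_i a nonzero unital A_i-module for each i = 1,…,n, and regard E = E_1 × ⋯ × E_n as a module over the product ring A = A_1 × ⋯ × A_n with componentwise scalar multiplication. Then E is an annihilator multiplication A-module if and only if E_i is an annihilator multiplication A_i-module for each i = 1,…,n. -/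
private lemma mem_ann_span_smul_top {A : Type*} [CommRing A] {E : Type*} [AddCommGroup E]
    [Module A E] (S : Set A) (a : A) :
    a ∈ ((Ideal.span S) • (⊤ : Submodule A E)).annihilator ↔
      ∀ r ∈ S, ∀ m : E, a • r • m = 0 := by
  rw [Submodule.mem_annihilator]
  constructor
  · intro h r hr m
    exact h _ (Submodule.smul_mem_smul (Ideal.subset_span hr) trivial)
  · intro h x hx
    have key : ∀ r ∈ Ideal.span S, ∀ m : E, a • r • m = 0 := by
      intro r hr
      induction hr using Submodule.span_induction with
      | mem r hr => exact h r hr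
      | zero => intro m; simp
      | add r s _ _ hr hs => intro m; rw [add_smul, smul_add, hr, hs, add_zero]
      | smul c r _ hr => intro m; rw [smul_assoc, smul_comm a c, hr, smul_zero]
    refine Submodule.smul_induction_on hx (fun r hr m _ => key r hr m) ?_
    intro x y hx hy
    rw [smul_add, hx, hy, add_zero]

/-- A finite product `E = E₁ × ⋯ × Eₙ` over `A = A₁ × ⋯ × Aₙ` is an annihilator
multiplication module iff each `Eᵢ` is an annihilator multiplication `Aᵢ`-module. -/
theorem pi_isAnnMultiplication_iff {n : ℕ} (hn : 1 ≤ n)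
    (A : Fin n → Type*) [∀ i, CommRing (A i)] [∀ i, Nontrivial (A i)]
    (E : Fin n → Type*) [∀ i, AddCommGroup (E i)] [∀ i, Module (A i) (E i)]
    [∀ i, Nontrivial (E i)] :
    IsAnnMultiplication (∀ i, A i) (∀ i, E i) ↔
      ∀ i, IsAnnMultiplication (A i) (E i) := by
  classical
  constructor
  · intro h i ei
    obtain ⟨I, hIfg, hI⟩ := h (Pi.single i ei)
    obtain ⟨T, hT⟩ := hIfg
    rw [← hT] at hI
    have Hc : ∀ a : (∀ j, A j), a • (Pi.single i ei) = 0 ↔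
        ∀ r ∈ (↑T : Set (∀ j, A j)), ∀ m : (∀ j, E j), a • r • m = 0 := by
      intro a
      rw [← Submodule.mem_annihilator_span_singleton, hI, mem_ann_span_smul_top]
    refine ⟨Ideal.span ((fun r : ∀ j, A j => r i) '' ↑T),
      Submodule.fg_span ((T.finite_toSet).image _), ?_⟩
    ext b
    rw [Submodule.mem_annihilator_span_singleton, mem_ann_span_smul_top]
    constructor
    · intro hb
      rintro r ⟨t, ht, rfl⟩ m
      have ha : (Pi.single i b : ∀ j, A j) • Pi.single i ei = 0 := by
        funext j
        rcases eq_or_ne j i with rfl | hj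
        · simp [Pi.smul_apply', hb]
        · simp [Pi.smul_apply', Pi.single_eq_of_ne hj]
      have := congrFun ((Hc _).mp ha t ht (Pi.single i m)) i
      simpa [Pi.smul_apply'] using this
    · intro hb
      have ha : (Pi.single i b : ∀ j, A j) • Pi.single i ei = 0 := by
        refine (Hc _).mpr ?_
        intro r hr m
        funext j
        rcases eq_or_ne j i with rfl | hj
        · simpa [Pi.smul_apply'] using hb (r j) ⟨r, hr, rfl⟩ (m j)
        · simp [Pi.smul_apply', Pi.single_eq_of_ne hj]
      have := congrFun ha i
      simpa [Pi.smul_apply'] using this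
  · intro h e
    choose I hIfg hI using fun i => h i (e i)
    choose T hT using hIfg
    have Hc : ∀ i, ∀ b : A i, b • e i = 0 ↔
        ∀ t ∈ (↑(T i) : Set (A i)), ∀ m : E i, b • t • m = 0 := by
      intro i b
      rw [← Submodule.mem_annihilator_span_singleton, hI i, ← hT i,
        mem_ann_span_smul_top]
    refine ⟨Ideal.span (⋃ i, (fun t => (Pi.single i t : ∀ j, A j)) '' ↑(T i)),
      Submodule.fg_span (Set.finite_iUnion fun i => (T i).finite_toSet.image _), ?_⟩
    ext a
    rw [Submodule.mem_annihilator_span_singleton, mem_ann_span_smul_top]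
    have lhs : (a • e = 0) ↔ ∀ i, a i • e i = 0 := by
      constructor
      · intro h0 i
        have := congrFun h0 i
        simpa [Pi.smul_apply'] using this
      · intro h0
        funext i
        simpa [Pi.smul_apply'] using h0 i
    rw [lhs]
    constructor
    · intro h0 r hr m
      simp only [Set.mem_iUnion, Set.mem_image, Finset.mem_coe] at hr
      obtain ⟨i, t, ht, rfl⟩ := hr
      funext j
      rcases eq_or_ne j i with rfl | hj
      · simpa [Pi.smul_apply'] using (Hc j (a j)).mp (h0 j) t ht (m j)
      · simp [Pi.smul_apply', Pi.single_eq_of_ne hj]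
    · intro h0 i
      refine (Hc i (a i)).mpr ?_
      intro t ht m
      have hmem : (Pi.single i t : ∀ j, A j) ∈
          ⋃ i, (fun t => (Pi.single i t : ∀ j, A j)) '' ↑(T i) :=
        Set.mem_iUnion.mpr ⟨i, ⟨t, ht, rfl⟩⟩
      have := congrFun (h0 _ hmem (Pi.single i m)) i
      simpa [Pi.smul_apply'] using this
end

section
/- Let E be a finitely generated A-module and T ⊆ A a multiplicatively closed set. If E is an annihilator multiplication A-module, then the localized module T⁻¹E is an annihilator multiplication module over the localized ring T⁻¹A. -/
private lemma LocalizedModule.mk_eq_zero' {A : Type*} [CommRing A] {E : Type*}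
    [AddCommGroup E] [Module A E] {T : Submonoid A} (m : E) (s : T) :
    LocalizedModule.mk m s = (0 : LocalizedModule T E) ↔ ∃ u : T, (u : A) • m = 0 := by
  rw [show (0 : LocalizedModule T E) = LocalizedModule.mk 0 1 from
    (LocalizedModule.zero_mk 1).symm, LocalizedModule.mk_eq]
  simp [Submonoid.smul_def]

private lemma mem_ann_smul_top {A : Type*} [CommRing A] {E : Type*} [AddCommGroup E]
    [Module A E] (b : A) (I : Ideal A) :
    b ∈ (I • (⊤ : Submodule A E)).annihilator ↔ ∀ i ∈ I, ∀ m : E, (b * i) • m = 0 := by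
  rw [Submodule.mem_annihilator]
  constructor
  · intro h i hi m
    rw [mul_smul]
    exact h _ (Submodule.smul_mem_smul hi Submodule.mem_top)
  · intro h n hn
    refine Submodule.smul_induction_on hn (fun i hi m _ => ?_) (fun x y hx hy => ?_)
    · rw [smul_smul]; exact h i hi m
    · rw [smul_add, hx, hy, add_zero]

/-- If `E` is a finitely generated annihilator multiplication `A`-module and `T ⊆ A` is
multiplicatively closed, then `T⁻¹E` is an annihilator multiplication `T⁻¹A`-module. -/
theorem localizedModule_isAnnMultiplication {A : Type*} [CommRing A] [Nontrivial A]
    {E : Type*} [AddCommGroup E] [Module A E] [Nontrivial E] [Module.Finite A E]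
    (T : Submonoid A) (hE : IsAnnMultiplication A E) :
    IsAnnMultiplication (Localization T) (LocalizedModule T E) := by
  classical
  intro x
  induction x using LocalizedModule.induction_on with
  | _ e t =>
  obtain ⟨I, hIfg, hann⟩ := hE e
  obtain ⟨ι, hι⟩ := hIfg
  obtain ⟨ε, hε⟩ := Module.Finite.fg_top (R := A) (M := E)
  set AL := Localization T
  refine ⟨I.map (algebraMap A AL), ?_, ?_⟩
  · rw [← hι, Ideal.map_span]
    exact ⟨ι.image (algebraMap A AL), by rw [Finset.coe_image]⟩
  · ext x
    induction x using Localization.induction_on with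
    | _ p =>
    obtain ⟨a, s⟩ := p
    rw [Submodule.mem_annihilator_span_singleton, LocalizedModule.mk_smul_mk,
      LocalizedModule.mk_eq_zero', mem_ann_smul_top]
    have lhs : ∀ u : T, ((u : A) • (a • e) = 0) ↔
        ∀ i ∈ I, ∀ m : E, (((u : A) * a) * i) • m = 0 := by
      intro u
      rw [smul_smul, ← Submodule.mem_annihilator_span_singleton, hann, mem_ann_smul_top]
    simp only [lhs]
    constructor
    · rintro ⟨u, hu⟩ j hj n
      obtain ⟨q, hq⟩ := (IsLocalization.mem_map_algebraMap_iff T AL).mp hj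
      induction n using LocalizedModule.induction_on with
      | _ e' t' =>
      obtain ⟨c, hc⟩ := IsLocalization.map_units AL q.2
      have h0 : (algebraMap A AL (q.2 : A)) •
          ((Localization.mk a s * j) • LocalizedModule.mk e' t') = 0 := by
        rw [smul_smul, show algebraMap A AL (q.2 : A) * (Localization.mk a s * j)
            = Localization.mk a s * (j * algebraMap A AL (q.2 : A)) by ring, hq,
          ← Localization.mk_one_eq_algebraMap, Localization.mk_mul,
          LocalizedModule.mk_smul_mk, LocalizedModule.mk_eq_zero']
        refine ⟨u, ?_⟩
        rw [smul_smul, ← mul_assoc]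
        exact hu _ q.1.2 e'
      rw [← hc] at h0
      have h1 := congrArg (fun w => (↑c⁻¹ : AL) • w) h0
      simpa [smul_smul] using h1
    · intro h
      have key : ∀ p ∈ ι ×ˢ ε, ∃ u : T, (u : A) • ((a * p.1) • p.2) = 0 := by
        rintro ⟨i, m⟩ hp
        obtain ⟨hi, hm⟩ := Finset.mem_product.mp hp
        have hj : algebraMap A AL i ∈ I.map (algebraMap A AL) :=
          Ideal.mem_map_of_mem _ (hι ▸ Ideal.subset_span hi)
        have h2 := h _ hj (LocalizedModule.mk m 1)
        rw [← Localization.mk_one_eq_algebraMap, Localization.mk_mul,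
          LocalizedModule.mk_smul_mk, LocalizedModule.mk_eq_zero'] at h2
        exact h2
      choose! f hf using key
      set u : T := ∏ p ∈ ι ×ˢ ε, f p with hu_def
      have hugen : ∀ i ∈ ι, ∀ m ∈ ε, (((u : A) * a) * i) • m = 0 := by
        intro i hi m hm
        have hp : (i, m) ∈ ι ×ˢ ε := Finset.mem_product.mpr ⟨hi, hm⟩
        have hprod : f (i, m) * ∏ q ∈ (ι ×ˢ ε).erase (i, m), f q = u :=
          Finset.mul_prod_erase _ f hp
        have hcoe : (u : A) = (f (i, m) : A) * ((∏ q ∈ (ι ×ˢ ε).erase (i, m), f q : T) : A) := by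
          rw [← hprod]; push_cast; ring
        have hs : ((u : A) * a) * i
            = ((∏ q ∈ (ι ×ˢ ε).erase (i, m), f q : T) : A) * ((f (i, m) : A) * ((a * i))) := by
          rw [hcoe]; ring
        rw [hs, mul_smul, mul_smul, hf (i, m) hp, smul_zero]
      refine ⟨u, ?_⟩
      intro i hi m
      rw [← hι] at hi
      induction hi using Submodule.span_induction with
      | mem i₀ hi₀ =>
        have : ((u : A) * a * i₀) ∈ (Submodule.span A (ε : Set E)).annihilator :=
          (Submodule.mem_annihilator_span _ _).mpr (fun n => hugen i₀ hi₀ n n.2)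
        rw [hε] at this
        exact Submodule.mem_annihilator.mp this m Submodule.mem_top
      | zero => simp
      | add x y hx hy px py => rw [mul_add, add_smul, px, py, add_zero]
      | smul r x hx px =>
        rw [smul_eq_mul, show (u : A) * a * (r * x) = r * ((u : A) * a * x) by ring,
          mul_smul, px, smul_zero]
end

section
/- Let φ: E → E′ be an A-module homomorphism between A-modules E and E′ such that ann(E) = ann(E′). If φ is injective and E′ is an annihilator multiplication module, then E is an annihilator multiplication module. -/
lemma mem_annihilator_smul_top_iff {A : Type*} [CommRing A] {M : Type*} [AddCommGroup M]
    [Module A M] (I : Ideal A) (a : A) :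
    a ∈ (I • (⊤ : Submodule A M)).annihilator ↔
      ∀ i ∈ I, a * i ∈ (⊤ : Submodule A M).annihilator := by
  simp only [Submodule.mem_annihilator]
  constructor
  · intro h i hi x _
    rw [mul_smul]
    exact h _ (Submodule.smul_mem_smul hi trivial)
  · intro h n hn
    refine Submodule.smul_induction_on hn ?_ ?_
    · intro i hi x hx
      rw [← mul_smul]
      exact h i hi x trivial
    · intro x y hx hy
      rw [smul_add, hx, hy, add_zero]

/-- If `φ : E → E'` is an injective `A`-homomorphism, `ann(E) = ann(E')` and `E'` is an
annihilator multiplication module, then so is `E`. -/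
theorem isAnnMultiplication_of_injective {A : Type*} [CommRing A] [Nontrivial A]
    {E : Type*} [AddCommGroup E] [Module A E] [Nontrivial E]
    {E' : Type*} [AddCommGroup E'] [Module A E'] [Nontrivial E']
    (φ : E →ₗ[A] E')
    (hann : (⊤ : Submodule A E).annihilator = (⊤ : Submodule A E').annihilator)
    (hinj : Function.Injective φ) (hE' : IsAnnMultiplication A E') :
    IsAnnMultiplication A E := by
  intro e
  obtain ⟨I, hI, h⟩ := hE' (φ e)
  refine ⟨I, hI, ?_⟩
  ext a
  rw [mem_annihilator_smul_top_iff, hann]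
  have h1 : a ∈ (Submodule.span A {e}).annihilator ↔ a • e = 0 := by
    rw [Submodule.mem_annihilator_span_singleton]
  have h2 : a ∈ (Submodule.span A {φ e}).annihilator ↔ a • φ e = 0 := by
    rw [Submodule.mem_annihilator_span_singleton]
  rw [h1]
  have : a • e = 0 ↔ a • φ e = 0 := by
    rw [← map_smul]
    exact ⟨fun h' => by rw [h', map_zero], fun h' => hinj (by rw [h', map_zero])⟩
  rw [this, ← h2, h, mem_annihilator_smul_top_iff]
end

section
/- Let E be an annihilator multiplication A-module and V a prime submodule of E such that ann(V) = (V :_A E). Then the quotient module E/V is an annihilator multiplication A-module. -/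
/-- A proper submodule `V` of `E` is a *prime submodule* if `a • e ∈ V` implies
`a ∈ (V :_A E)` or `e ∈ V`. -/
def IsPrimeSubmodule {A : Type*} [CommRing A] {E : Type*} [AddCommGroup E]
    [Module A E] (V : Submodule A E) : Prop :=
  V ≠ ⊤ ∧ ∀ (a : A) (e : E), a • e ∈ V → a ∈ V.colon ⊤ ∨ e ∈ V

/-- If `E` is an annihilator multiplication module and `V` is a prime submodule with
`ann(V) = (V :_A E)`, then `E/V` is an annihilator multiplication module. -/
theorem quotient_isAnnMultiplication {A : Type*} [CommRing A] [Nontrivial A]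
    {E : Type*} [AddCommGroup E] [Module A E] [Nontrivial E]
    (hE : IsAnnMultiplication A E) (V : Submodule A E) (hprime : IsPrimeSubmodule V)
    (hcolon : V.annihilator = V.colon ⊤) :
    IsAnnMultiplication A (E ⧸ V) := by
  intro e'
  obtain ⟨e, rfl⟩ := Submodule.Quotient.mk_surjective V e'
  by_cases he : e ∈ V
  · refine ⟨⊥, ⟨∅, by simp⟩, ?_⟩
    have h1 : (Submodule.Quotient.mk e : E ⧸ V) = 0 :=
      (Submodule.Quotient.mk_eq_zero V).2 he
    rw [h1]
    simp
  · have hcol_ne : V.colon ⊤ ≠ ⊤ := by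
      intro h
      apply hprime.1
      ext x
      simp only [Submodule.mem_top, iff_true]
      have h1 : (1 : A) ∈ V.colon ⊤ := h ▸ Submodule.mem_top
      simpa using Submodule.mem_colon.mp h1 x (Set.mem_univ _)
    obtain ⟨a₀, ha₀⟩ : ∃ a₀, a₀ ∉ V.colon ⊤ := by
      by_contra h; push_neg at h
      exact hcol_ne (eq_top_iff.2 fun x _ => h x)
    obtain ⟨x₀, hx₀⟩ : ∃ x₀, a₀ • x₀ ∉ V := by
      by_contra h; push_neg at h
      exact ha₀ (Submodule.mem_colon.2 fun p _ => h p)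
    refine ⟨Ideal.span {a₀}, ⟨{a₀}, by simp⟩, ?_⟩
    ext a
    rw [Submodule.mem_annihilator, Submodule.mem_annihilator]
    constructor
    · intro h
      have hae : a • e ∈ V := by
        have h2 := h (Submodule.Quotient.mk e) (Submodule.mem_span_singleton_self _)
        rwa [← Submodule.Quotient.mk_smul, Submodule.Quotient.mk_eq_zero] at h2
      have hacol : a ∈ V.colon ⊤ := (hprime.2 a e hae).resolve_right he
      intro n hn
      refine Submodule.smul_induction_on hn ?_ ?_
      · rintro r hr x -
        obtain ⟨c, rfl⟩ := Ideal.mem_span_singleton'.mp hr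
        obtain ⟨y, rfl⟩ := Submodule.Quotient.mk_surjective V x
        have hmem : a • (c * a₀) • y ∈ V :=
          Submodule.mem_colon.mp hacol ((c * a₀) • y) (Set.mem_univ _)
        calc a • (c * a₀) • (Submodule.Quotient.mk y : E ⧸ V)
            = Submodule.Quotient.mk (a • (c * a₀) • y) := rfl
          _ = 0 := (Submodule.Quotient.mk_eq_zero V).2 hmem
      · intro x y hx hy; rw [smul_add, hx, hy, add_zero]
    · intro h n hn
      rw [Submodule.mem_span_singleton] at hn
      obtain ⟨c, rfl⟩ := hn
      have hacol : a ∈ V.colon ⊤ := by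
        have h1 : a • (a₀ • (Submodule.Quotient.mk x₀ : E ⧸ V)) = 0 :=
          h _ (Submodule.smul_mem_smul (Ideal.mem_span_singleton_self a₀)
            Submodule.mem_top)
        have h2 : (Submodule.Quotient.mk (a • a₀ • x₀) : E ⧸ V) = 0 := by
          rw [Submodule.Quotient.mk_smul, Submodule.Quotient.mk_smul]; exact h1
        have h3 : a • (a₀ • x₀) ∈ V := (Submodule.Quotient.mk_eq_zero V).1 h2
        exact (hprime.2 a (a₀ • x₀) h3).resolve_right hx₀
      have hae : a • e ∈ V := Submodule.mem_colon.mp hacol e (Set.mem_univ _)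
      have : a • (Submodule.Quotient.mk e : E ⧸ V) = 0 := by
        rw [← Submodule.Quotient.mk_smul]
        exact (Submodule.Quotient.mk_eq_zero V).2 hae
      rw [smul_comm, this, smul_zero]
end

section
/- Let E be an annihilator multiplication A-module and V a submodule of E that is both pure in E and essential in E. Then V is an annihilator multiplication A-module. -/
lemma ann_map_subtype {A : Type*} [CommRing A] {E : Type*} [AddCommGroup E] [Module A E]
    (V : Submodule A E) (N : Submodule A V) :
    (N.map V.subtype).annihilator = N.annihilator := by
  ext a
  simp only [Submodule.mem_annihilator]
  constructor
  · intro h n hn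
    have := h n (Submodule.mem_map_of_mem hn)
    exact Subtype.ext (by simpa using this)
  · rintro h x ⟨n, hn, rfl⟩
    have := congrArg V.subtype (h n hn)
    simpa using this

/-- If `E` is an annihilator multiplication module and `V` is a pure and essential
submodule of `E`, then `V` is an annihilator multiplication module. -/
theorem pure_essential_isAnnMultiplication {A : Type*} [CommRing A] [Nontrivial A]
    {E : Type*} [AddCommGroup E] [Module A E] [Nontrivial E]
    (hE : IsAnnMultiplication A E) (V : Submodule A E)
    (hpure : ∀ I : Ideal A, (I • (⊤ : Submodule A E)) ⊓ V = I • V)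
    (hne : V ≠ ⊥) (hess : ∀ K : Submodule A E, K ⊓ V = ⊥ → K = ⊥) :
    IsAnnMultiplication A V := by
  intro v
  obtain ⟨I, hfg, hann⟩ := hE (v : E)
  refine ⟨I, hfg, ?_⟩
  -- rewrite both annihilators as annihilators of submodules of `E`
  have hmap : Submodule.map V.subtype (I • (⊤ : Submodule A V)) = I • V := by
    rw [Submodule.map_smul'', Submodule.map_top, Submodule.range_subtype]
  have hspan : Submodule.map V.subtype (Submodule.span A {v}) =
      Submodule.span A {(v : E)} := by
    rw [Submodule.map_span]; simp
  rw [← ann_map_subtype V (Submodule.span A {v}), ← ann_map_subtype V (I • ⊤), hmap, hspan,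
    hann]
  -- now goal: (I • ⊤ : Submodule A E).annihilator = (I • V).annihilator
  apply le_antisymm
  · exact Submodule.annihilator_mono (smul_mono_right I le_top)
  · intro a ha
    rw [Submodule.mem_annihilator] at ha ⊢
    -- first: (span{a} * I) • ⊤ = ⊥ by essentiality and purity
    have hbot : (Ideal.span {a} * I) • (⊤ : Submodule A E) = ⊥ := by
      apply hess
      rw [hpure]
      rw [← smul_eq_mul, Submodule.smul_assoc]
      refine le_bot_iff.mp (Submodule.smul_le.mpr ?_)
      intro r hr x hx
      obtain ⟨c, rfl⟩ := Ideal.mem_span_singleton'.mp hr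
      rw [mul_smul]
      rw [ha x hx, smul_zero]; exact Submodule.zero_mem ⊥
    intro x hx
    have : a • x ∈ (Ideal.span {a} * I) • (⊤ : Submodule A E) := by
      rw [← smul_eq_mul, Submodule.smul_assoc]
      exact Submodule.smul_mem_smul (Ideal.mem_span_singleton_self a) hx
    rw [hbot] at this
    simpa using this
end

section
/- Let E be an A-module that is the internal direct sum of a family {E_i}_{i∈Δ} of submodules (i.e., the family is independent and its sum is E) such that ann(E_i) = ann(E_j) for all i ≠ j in Δ. Then E is an annihilator multiplication module if and only if E_i is an annihilator multiplication module for every i ∈ Δ. -/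
section Aux

variable {A : Type*} [CommRing A] {E F : Type*} [AddCommGroup E] [Module A E]
  [AddCommGroup F] [Module A F]

/-- The annihilator of `I • N` is the colon ideal `(ann N : I)`. -/
lemma ann_smul_eq_colon (I : Ideal A) (N : Submodule A E) :
    (I • N).annihilator = N.annihilator.colon I := by
  ext a
  rw [Submodule.mem_annihilator, Submodule.mem_colon]
  constructor
  · intro h x hx
    rw [smul_eq_mul, Submodule.mem_annihilator]
    intro n hn
    rw [mul_smul]
    exact h _ (Submodule.smul_mem_smul hx hn)
  · intro h m hm
    refine Submodule.smul_induction_on hm ?_ ?_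
    · intro x hx n hn
      have hx' := h x hx
      rw [smul_eq_mul, Submodule.mem_annihilator] at hx'
      rw [smul_comm] at *
      rw [← mul_smul]
      rw [mul_comm]
      exact hx' n hn
    · intro m₁ m₂ h1 h2
      rw [smul_add, h1, h2, add_zero]

/-- The annihilator of the module `V` equals the annihilator of `V` as submodule. -/
lemma ann_top_coe (V : Submodule A E) :
    (⊤ : Submodule A V).annihilator = V.annihilator := by
  ext a
  simp only [Submodule.mem_annihilator, Submodule.mem_top, forall_true_left]
  constructor
  · intro h n hn
    have := h ⟨n, hn⟩
    rwa [Subtype.ext_iff] at this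
  · intro h n
    exact Subtype.ext (h n.1 n.2)

lemma isAnnMultiplication_of_equiv (f : E ≃ₗ[A] F)
    (h : IsAnnMultiplication A E) : IsAnnMultiplication A F := by
  intro e
  obtain ⟨I, hfg, hI⟩ := h (f.symm e)
  refine ⟨I, hfg, ?_⟩
  have h1 : (Submodule.span A {e}).annihilator
      = (Submodule.span A {f.symm e}).annihilator := by
    ext a
    rw [Submodule.mem_annihilator_span_singleton, Submodule.mem_annihilator_span_singleton]
    constructor
    · intro h'
      apply f.injective
      rw [map_smul, map_zero, f.apply_symm_apply, h']
    · intro h'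
      have := congrArg f h'
      rwa [map_smul, map_zero, f.apply_symm_apply] at this
  have h2 : (⊤ : Submodule A F).annihilator = (⊤ : Submodule A E).annihilator := by
    ext a
    simp only [Submodule.mem_annihilator, Submodule.mem_top, forall_true_left]
    constructor
    · intro h' m
      apply f.injective
      rw [map_smul, map_zero, h']
    · intro h' m
      have := congrArg f (h' (f.symm m))
      rwa [map_smul, map_zero, f.apply_symm_apply] at this
  rw [h1, hI, ann_smul_eq_colon, ann_smul_eq_colon, h2]

end Aux

/-- If `E` is the internal direct sum of a family `{Eᵢ}` of submodules with
`ann(Eᵢ) = ann(Eⱼ)` for all `i ≠ j`, then `E` is an annihilator multiplication module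
iff each `Eᵢ` is. -/
theorem directSum_isAnnMultiplication_iff {A : Type*} [CommRing A] [Nontrivial A]
    {E : Type*} [AddCommGroup E] [Module A E] [Nontrivial E]
    {Δ : Type*} (Efam : Δ → Submodule A E)
    (hindep : iSupIndep Efam) (hsum : (⨆ i, Efam i) = ⊤)
    (hann : ∀ i j, i ≠ j → (Efam i).annihilator = (Efam j).annihilator) :
    IsAnnMultiplication A E ↔ ∀ i, IsAnnMultiplication A (Efam i) := by
  classical
  -- Δ is nonempty
  have hne : Nonempty Δ := by
    by_contra hempty
    rw [not_nonempty_iff] at hempty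
    rw [iSup_of_empty] at hsum
    exact absurd hsum bot_ne_top
  obtain ⟨i₀⟩ := hne
  by_cases hsub : ∀ i j : Δ, i = j
  · -- subsingleton case: Efam i₀ = ⊤
    have htop : Efam i₀ = ⊤ := by
      rw [← hsum]
      refine le_antisymm (le_iSup _ i₀) (iSup_le fun i => ?_)
      rw [hsub i i₀]
    have equiv1 : (Efam i₀) ≃ₗ[A] E :=
      (LinearEquiv.ofEq _ _ htop).trans Submodule.topEquiv
    constructor
    · intro h i
      rw [hsub i i₀]
      exact isAnnMultiplication_of_equiv equiv1.symm h
    · intro h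
      exact isAnnMultiplication_of_equiv equiv1 (h i₀)
  · -- there are two distinct indices
    push_neg at hsub
    obtain ⟨i₁, j₁, hij⟩ := hsub
    set J := (Efam i₁).annihilator with hJdef
    have hJ : ∀ i, (Efam i).annihilator = J := by
      intro i
      by_cases hi : i = i₁
      · rw [hi]
      · exact hann i i₁ hi
    have hannE : (⊤ : Submodule A E).annihilator = J := by
      rw [← hsum, Submodule.annihilator_iSup]
      refine le_antisymm (iInf_le_of_le i₁ (le_of_eq (hJ i₁))) (le_iInf fun i => le_of_eq (hJ i).symm)
    -- key : annihilator of I • ⊤ in E is J.colon I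
    have keyE : ∀ I : Ideal A, (I • (⊤ : Submodule A E)).annihilator = J.colon I := by
      intro I; rw [ann_smul_eq_colon, hannE]
    have keyI : ∀ (i : Δ) (I : Ideal A),
        (I • (⊤ : Submodule A (Efam i))).annihilator = J.colon I := by
      intro i I; rw [ann_smul_eq_colon, ann_top_coe, hJ i]
    constructor
    · -- E ann mult → each Efam i
      intro h i x
      obtain ⟨I, hfg, hI⟩ := h (x : E)
      refine ⟨I, hfg, ?_⟩
      rw [keyI i I, ← keyE I, ← hI]
      ext a
      rw [Submodule.mem_annihilator_span_singleton, Submodule.mem_annihilator_span_singleton]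
      simp [Subtype.ext_iff]
    · -- each Efam i ann mult → E
      intro h e
      have hint : DirectSum.IsInternal Efam :=
        DirectSum.isInternal_submodule_of_iSupIndep_of_iSup_eq_top hindep hsum
      have hco : ∀ x : DirectSum Δ (fun i => ↥(Efam i)),
          DirectSum.coeLinearMap Efam x = DirectSum.coeAddMonoidHom Efam x := by
        intro x
        rw [DirectSum.coeLinearMap_eq_dfinsuppSum, DirectSum.coeAddMonoidHom_eq_dfinsuppSum]
      obtain ⟨d, hd⟩ := hint.surjective e
      rw [← hco] at hd
      choose Ifam hIfg hIann using fun i => h i (d i)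
      set s := d.support with hs
      refine ⟨s.sup Ifam, Submodule.fg_finset_sup _ _ fun i _ => hIfg i, ?_⟩
      rw [keyE]
      ext a
      rw [Submodule.mem_annihilator_span_singleton, Submodule.mem_colon]
      -- a • e = 0 ↔ ∀ i, a • d i = 0
      have hsmul : a • e = 0 ↔ ∀ i, a • d i = 0 := by
        constructor
        · intro h0
          have : DirectSum.coeLinearMap Efam (a • d) = 0 := by
            rw [map_smul, hd, h0]
          have hz : a • d = 0 := by
            apply hint.injective
            rw [← hco, this, ← hco, map_zero]
          intro i
          calc a • d i = (a • d) i := rfl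
            _ = (0 : DirectSum Δ (fun i => ↥(Efam i))) i := by rw [hz]
            _ = 0 := rfl
        · intro h0
          rw [← hd, ← map_smul]
          have : a • d = 0 := DFinsupp.ext fun i => h0 i
          rw [this, map_zero]
      -- each a • d i = 0 ↔ a ∈ J.colon (Ifam i)
      have hiff : ∀ i, a • d i = 0 ↔ a ∈ J.colon (Ifam i) := by
        intro i
        rw [← keyI i, ← hIann i, Submodule.mem_annihilator_span_singleton]
      rw [hsmul]
      constructor
      · intro h0 x hx
        -- x ∈ s.sup Ifam ; use ideal K = {x | a • x ∈ J}
        have hK : s.sup Ifam ≤ Submodule.comap (a • (LinearMap.id : A →ₗ[A] A)) J := by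
          refine Finset.sup_le fun i _ => ?_
          intro y hy
          have := (hiff i).mp (h0 i)
          rw [Submodule.mem_colon] at this
          exact this y hy
        exact hK hx
      · intro h0 i
        by_cases hi : i ∈ s
        · refine (hiff i).mpr ?_
          rw [Submodule.mem_colon]
          intro y hy
          exact h0 y ((Finset.le_sup hi : Ifam i ≤ s.sup Ifam) hy)
        · rw [hs] at hi
          rw [DFinsupp.notMem_support_iff] at hi
          rw [hi, smul_zero]
end

section
/- Let E be an Armendariz A-module and let p(X) = a₀ + a₁X + ⋯ + a_kX^k ∈ A[X]. Then the annihilator in A[X] of the A[X]-submodule p(X)·E[X] of the polynomial module E[X] equals J[X], where J = ⋂_{i=0}^{k} ann_A(a_iE) and J[X] denotes the ideal of A[X] consisting of all polynomials whose coefficients all lie in J. -/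
/-- `E` is an *Armendariz module* if whenever `f(X) • e(X) = 0` in the polynomial
module `E[X]`, all products of coefficients `fᵢ • eⱼ` vanish. -/
def IsArmendariz (A : Type*) [CommRing A] (E : Type*) [AddCommGroup E]
    [Module A E] : Prop :=
  ∀ (f : Polynomial A) (e : PolynomialModule A E), f • e = 0 →
    ∀ i j : ℕ, f.coeff i • e.coeff j = 0

/-- Membership in the annihilator of `span{a} • ⊤` means annihilating all `a • m`. -/
lemma mem_ann_span_singleton_smul_top {R : Type*} [CommRing R] {M : Type*}
    [AddCommGroup M] [Module R M] (c a : R) :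
    c ∈ (Ideal.span {a} • (⊤ : Submodule R M)).annihilator ↔ ∀ m : M, c • a • m = 0 := by
  rw [Submodule.mem_annihilator]
  constructor
  · intro h m
    exact h (a • m) (Submodule.smul_mem_smul (Ideal.mem_span_singleton_self a) trivial)
  · intro h x hx
    refine Submodule.smul_induction_on hx ?_ ?_
    · intro r hr m _
      obtain ⟨b, rfl⟩ := Ideal.mem_span_singleton.mp hr
      rw [mul_comm, mul_smul, smul_comm c b, h m, smul_zero]
    · intro x y hx hy
      rw [smul_add, hx, hy, add_zero]

/-- For an Armendariz module `E` and `p(X) = a₀ + a₁X + ⋯ + a_kX^k ∈ A[X]`, the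
annihilator in `A[X]` of the submodule `p(X)·E[X]` of `E[X]` equals `J[X]`, where
`J = ⋂_{i=0}^{k} ann_A(aᵢE)`, i.e. it consists exactly of the polynomials all of whose
coefficients lie in `J`. -/
theorem annihilator_polynomial_smul {A : Type*} [CommRing A] [Nontrivial A]
    {E : Type*} [AddCommGroup E] [Module A E] [Nontrivial E]
    (hArm : IsArmendariz A E) (k : ℕ) (p : Polynomial A) (hp : p.natDegree ≤ k) :
    ∀ f : Polynomial A,
      f ∈ (Ideal.span {p} •
        (⊤ : Submodule (Polynomial A) (PolynomialModule A E))).annihilator ↔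
      ∀ n : ℕ, f.coeff n ∈ ⨅ i ∈ Finset.range (k + 1),
        (Ideal.span {p.coeff i} • (⊤ : Submodule A E)).annihilator := by
  intro f
  rw [mem_ann_span_singleton_smul_top]
  constructor
  · intro h n
    simp only [Submodule.mem_iInf]
    intro i _
    rw [mem_ann_span_singleton_smul_top]
    intro m
    have h0 := hArm f (p • PolynomialModule.single A 0 m) (h _) n i
    simpa using h0
  · intro h e
    -- all coefficients f_n • p_i • m vanish
    have key : ∀ n i : ℕ, ∀ m : E, f.coeff n • p.coeff i • m = 0 := by
      intro n i m
      by_cases hi : i ≤ k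
      · have := h n
        simp only [Submodule.mem_iInf] at this
        exact (mem_ann_span_singleton_smul_top _ _).mp
          (this i (Finset.mem_range.mpr (Nat.lt_succ_of_le hi))) m
      · rw [Polynomial.coeff_eq_zero_of_natDegree_lt (lt_of_le_of_lt hp (not_le.mp hi)),
          zero_smul, smul_zero]
    rw [smul_smul]
    refine PolynomialModule.ext (Finsupp.ext fun j => ?_)
    rw [PolynomialModule.smul_apply, PolynomialModule.coeff_zero, Finsupp.zero_apply]
    refine Finset.sum_eq_zero fun x _ => ?_
    rw [Polynomial.coeff_mul, Finset.sum_smul]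
    refine Finset.sum_eq_zero fun y _ => ?_
    rw [mul_smul]
    exact key y.1 y.2 (e.coeff x.2)
end

section
/- Let E be an annihilator multiplication A-module such that ann(e) ≠ ann(E) for every e ∈ E. Then the zero submodule of E is a classical prime submodule if and only if it is a classical 1-absorbing prime submodule. -/
/-- A proper submodule `V` of `E` is a *classical prime submodule* if `a • b • e ∈ V`
implies `a • e ∈ V` or `b • e ∈ V`. -/
def IsClassicalPrime {A : Type*} [CommRing A] {E : Type*} [AddCommGroup E]
    [Module A E] (V : Submodule A E) : Prop :=
  V ≠ ⊤ ∧ ∀ (a b : A) (e : E), a • b • e ∈ V → a • e ∈ V ∨ b • e ∈ V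

/-- A proper submodule `V` of `E` is a *classical 1-absorbing prime submodule* if for
nonunits `a, b, c` and `e ∈ E`, `a • b • c • e ∈ V` implies `a • b • e ∈ V` or
`c • e ∈ V`. -/
def IsClassicalOneAbsorbingPrime {A : Type*} [CommRing A] {E : Type*} [AddCommGroup E]
    [Module A E] (V : Submodule A E) : Prop :=
  V ≠ ⊤ ∧ ∀ (a b c : A) (e : E), ¬IsUnit a → ¬IsUnit b → ¬IsUnit c →
    a • b • c • e ∈ V → a • b • e ∈ V ∨ c • e ∈ V

private lemma sms {A : Type*} [CommRing A] {E : Type*} [AddCommGroup E] [Module A E]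
    (a b c : A) (x : E) : a • b • c • x = (a * b * c) • x := by
  rw [smul_smul, smul_smul]


/-- If `E` is an annihilator multiplication module with `ann(e) ≠ ann(E)` for every
`e ∈ E`, then the zero submodule is classical prime iff it is classical 1-absorbing
prime. -/
theorem zero_classicalPrime_iff {A : Type*} [CommRing A] [Nontrivial A]
    {E : Type*} [AddCommGroup E] [Module A E] [Nontrivial E]
    (hE : IsAnnMultiplication A E)
    (hne : ∀ e : E, (Submodule.span A {e}).annihilator ≠
      (⊤ : Submodule A E).annihilator) :
    IsClassicalPrime (⊥ : Submodule A E) ↔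
      IsClassicalOneAbsorbingPrime (⊥ : Submodule A E) := by
  constructor
  · rintro ⟨hT, hp⟩
    refine ⟨hT, fun a b c e _ _ _ h => ?_⟩
    simp only [Submodule.mem_bot] at *
    have h' : a • (b * c) • e = 0 := by rw [← smul_smul]; exact h
    rcases hp a (b*c) e h' with ha | hbc
    · left; rw [smul_comm]; rw [ha, smul_zero]
    · rw [← smul_smul] at hbc
      rcases hp b c e hbc with hb | hc
      · left; rw [hb, smul_zero]
      · right; exact hc
  · rintro ⟨hT, hp⟩
    refine ⟨hT, fun a b e h => ?_⟩
    simp only [Submodule.mem_bot] at *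
    by_cases hua : IsUnit a
    · right
      obtain ⟨u, rfl⟩ := hua
      have := congrArg (fun x => (↑u⁻¹ : A) • x) h
      simpa [smul_smul] using this
    by_cases hub : IsUnit b
    · left
      obtain ⟨u, rfl⟩ := hub
      have := congrArg (fun x => (↑u⁻¹ : A) • x) h
      have h2 : ((↑u⁻¹ * (a * ↑u) : A)) • e = 0 := by simpa [smul_smul] using this
      rw [show (↑u⁻¹ * (a * ↑u) : A) = (↑u⁻¹ * ↑u) * a by ring, Units.inv_mul, one_mul] at h2
      exact h2
    obtain ⟨I, -, hI⟩ := hE e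
    -- every element of I is a nonunit
    have hIne : ∀ i ∈ I, ¬ IsUnit i := by
      intro i hi hu
      have : I = ⊤ := Ideal.eq_top_of_isUnit_mem I hi hu
      apply hne e
      rw [hI, this, Submodule.top_smul]
    -- a*b ∈ ann(I•⊤)
    have hab : ∀ i ∈ I, ∀ x : E, (a * b) • i • x = 0 := by
      intro i hi x
      have habm : (a * b) ∈ (I • (⊤ : Submodule A E)).annihilator := by
        rw [← hI, Submodule.mem_annihilator_span_singleton, ← smul_smul]; exact h
      exact Submodule.mem_annihilator.mp habm _
        (Submodule.smul_mem_smul hi Submodule.mem_top)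
    have hab' : ∀ i ∈ I, ∀ x : E, a • b • i • x = 0 := by
      intro i hi x; rw [sms, ← smul_smul]; exact hab i hi x
    -- if a kills I•E then a•e = 0, similarly for b
    by_cases hka : ∀ i ∈ I, ∀ x : E, a • i • x = 0
    · left
      have : a ∈ (I • (⊤ : Submodule A E)).annihilator := by
        rw [Submodule.mem_annihilator]
        intro m hm
        refine Submodule.smul_induction_on hm (fun i hi x _ => hka i hi x) ?_
        intro x y hx hy; rw [smul_add, hx, hy, add_zero]
      rw [← hI, Submodule.mem_annihilator_span_singleton] at this
      exact this
    by_cases hkb : ∀ i ∈ I, ∀ x : E, b • i • x = 0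
    · right
      have : b ∈ (I • (⊤ : Submodule A E)).annihilator := by
        rw [Submodule.mem_annihilator]
        intro m hm
        refine Submodule.smul_induction_on hm (fun i hi x _ => hkb i hi x) ?_
        intro x y hx hy; rw [smul_add, hx, hy, add_zero]
      rw [← hI, Submodule.mem_annihilator_span_singleton] at this
      exact this
    exfalso
    push_neg at hka hkb
    obtain ⟨i₀, hi₀, x₀, h₀⟩ := hka
    obtain ⟨i₁, hi₁, x₁, h₁⟩ := hkb
    have hni₀ := hIne i₀ hi₀
    have hni₁ := hIne i₁ hi₁
    -- b • x₀ = 0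
    have hbx₀ : b • x₀ = 0 := by
      have key : a • i₀ • b • x₀ = 0 := by
        rw [sms]; rw [show a * i₀ * b = a * b * i₀ by ring, ← sms]
        exact hab' i₀ hi₀ x₀
      rcases hp a i₀ b x₀ hua hni₀ hub key with h' | h'
      · exact absurd h' h₀
      · exact h'
    -- a • x₁ = 0
    have hax₁ : a • x₁ = 0 := by
      have key : b • i₁ • a • x₁ = 0 := by
        rw [sms]; rw [show b * i₁ * a = a * b * i₁ by ring, ← sms]
        exact hab' i₁ hi₁ x₁
      rcases hp b i₁ a x₁ hub hni₁ hua key with h' | h'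
      · exact absurd h' h₁
      · exact h'
    -- b • x₁ ≠ 0
    have hbx₁ : b • x₁ ≠ 0 := by
      intro h'
      apply h₁
      rw [smul_comm, h', smul_zero]
    -- apply 1-absorbing to x₀ + x₁
    have key : a • i₀ • b • (x₀ + x₁) = 0 := by
      rw [sms, show a * i₀ * b = a * b * i₀ by ring, ← sms]
      exact hab' i₀ hi₀ (x₀ + x₁)
    rcases hp a i₀ b (x₀ + x₁) hua hni₀ hub key with h' | h'
    · apply h₀
      have : a • i₀ • x₀ + a • i₀ • x₁ = 0 := by
        rw [← smul_add, ← smul_add]; exact h'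
      have hz : a • i₀ • x₁ = 0 := by
        rw [smul_comm, hax₁, smul_zero]
      rw [hz, add_zero] at this
      exact this
    · apply hbx₁
      rw [smul_add, hbx₀, zero_add] at h'
      exact h'
end

section
/- Let E be a nonzero A-module. Then E is a torsion-free module if and only if A is an integral domain, E is a faithful A-module, and E is an annihilator multiplication A-module. -/
/-- `E` is torsion-free iff `A` is an integral domain, `E` is a faithful `A`-module and
`E` is an annihilator multiplication `A`-module. -/
theorem torsionFree_iff {A : Type*} [CommRing A] [Nontrivial A]
    {E : Type*} [AddCommGroup E] [Module A E] [Nontrivial E] :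
    (∀ e : E, e ≠ 0 → ∀ a : A, a • e = 0 → a = 0) ↔
      (IsDomain A ∧ (⊤ : Submodule A E).annihilator = ⊥ ∧
        IsAnnMultiplication A E) := by
  constructor
  · intro h
    obtain ⟨e₀, he₀⟩ := exists_ne (0 : E)
    haveI : NoZeroDivisors A := by
      refine ⟨fun {a b} hab => ?_⟩
      by_cases hb : b = 0
      · exact Or.inr hb
      · refine Or.inl ?_
        have hbe : b • e₀ ≠ 0 := fun hz => hb (h e₀ he₀ b hz)
        have hz : a • (b • e₀) = 0 := by rw [smul_smul, hab, zero_smul]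
        exact h _ hbe a hz
    have hfaith : (⊤ : Submodule A E).annihilator = ⊥ := by
      rw [eq_bot_iff]
      intro a ha
      rw [Submodule.mem_annihilator] at ha
      exact (Submodule.mem_bot A).mpr (h e₀ he₀ a (ha e₀ Submodule.mem_top))
    refine ⟨NoZeroDivisors.to_isDomain A, hfaith, ?_⟩
    intro e
    by_cases he : e = 0
    · refine ⟨⊥, Submodule.fg_bot, ?_⟩
      subst he
      rw [Submodule.span_zero_singleton, Submodule.bot_smul]
    · refine ⟨⊤, ⟨{1}, by simp⟩, ?_⟩
      rw [Submodule.top_smul, hfaith, eq_bot_iff]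
      intro a ha
      rw [Submodule.mem_annihilator_span_singleton] at ha
      exact (Submodule.mem_bot A).mpr (h e he a ha)
  · rintro ⟨hdom, hfaith, hmul⟩ e he a hae
    obtain ⟨I, _, hI⟩ := hmul e
    have haI : a ∈ (Submodule.span A {e}).annihilator :=
      (Submodule.mem_annihilator_span_singleton _ _).mpr hae
    rw [hI, Submodule.mem_annihilator] at haI
    by_cases hI0 : I = ⊥
    · exfalso
      apply he
      have h1 : (1 : A) ∈ (Submodule.span A {e}).annihilator := by
        rw [hI, hI0, Submodule.bot_smul]
        simp [Submodule.mem_annihilator]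
      simpa using (Submodule.mem_annihilator_span_singleton _ _).mp h1
    · obtain ⟨i, hiI, hi0⟩ := Submodule.ne_bot_iff I |>.mp hI0
      have hmem : (a * i) ∈ (⊤ : Submodule A E).annihilator := by
        rw [Submodule.mem_annihilator]
        intro x _
        rw [mul_smul]
        exact haI _ (Submodule.smul_mem_smul hiI Submodule.mem_top)
      rw [hfaith, Submodule.mem_bot] at hmem
      rcases mul_eq_zero.mp hmem with h | h
      · exact h
      · exact absurd h hi0
end

section
/- Let E be a comultiplication A-module. Then E is a multiplication module if and only if E is an annihilator multiplication module. -/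
/-- A comultiplication module `E` is a multiplication module iff it is an annihilator
multiplication module. -/
theorem comultiplication_multiplication_iff {A : Type*} [CommRing A] [Nontrivial A]
    {E : Type*} [AddCommGroup E] [Module A E] [Nontrivial E]
    (hco : ∀ V : Submodule A E, ∀ e : E, e ∈ V ↔ ∀ a ∈ V.annihilator, a • e = 0) :
    (∀ V : Submodule A E, ∃ I : Ideal A, V = I • (⊤ : Submodule A E)) ↔
      IsAnnMultiplication A E := by
  constructor
  · intro hmul e
    obtain ⟨I, hI⟩ := hmul (Submodule.span A {e})
    have he : e ∈ I • (⊤ : Submodule A E) := by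
      rw [← hI]; exact Submodule.mem_span_singleton_self e
    -- extract a finitely generated subideal
    have key : ∃ J : Ideal A, J.FG ∧ J ≤ I ∧ e ∈ J • (⊤ : Submodule A E) := by
      refine Submodule.smul_induction_on he ?_ ?_
      · intro r hr n _
        refine ⟨Ideal.span {r}, ⟨{r}, by simp⟩, ?_, ?_⟩
        · rwa [Ideal.span_le, Set.singleton_subset_iff]
        · exact Submodule.smul_mem_smul (Ideal.mem_span_singleton_self r)
            (Submodule.mem_top)
      · rintro x y ⟨J1, h1, hle1, hx⟩ ⟨J2, h2, hle2, hy⟩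
        exact ⟨J1 ⊔ J2, Submodule.FG.sup h1 h2, sup_le hle1 hle2,
          Submodule.add_mem _ (Submodule.smul_mono_left le_sup_left hx)
            (Submodule.smul_mono_left le_sup_right hy)⟩
    obtain ⟨J, hJfg, hJle, heJ⟩ := key
    refine ⟨J, hJfg, ?_⟩
    have : Submodule.span A {e} = J • (⊤ : Submodule A E) := by
      apply le_antisymm
      · rwa [Submodule.span_singleton_le_iff_mem]
      · calc J • (⊤ : Submodule A E) ≤ I • ⊤ := Submodule.smul_mono_left hJle
          _ = Submodule.span A {e} := hI.symm
    rw [this]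
  · intro hann V
    choose f hfg hf using hann
    -- each f e • ⊤ has the same annihilator as span {e}
    have hsub : ∀ e ∈ V, f e • (⊤ : Submodule A E) ≤ V := by
      intro e heV x hx
      rw [hco]
      intro a haV
      have ha : a ∈ (f e • (⊤ : Submodule A E)).annihilator := by
        rw [← hf]
        rw [Submodule.mem_annihilator]
        intro m hm
        rw [Submodule.mem_span_singleton] at hm
        obtain ⟨c, rfl⟩ := hm
        rw [smul_comm]
        have := (hco V e).mp heV a haV
        rw [this, smul_zero]
      exact Submodule.mem_annihilator.mp ha x hx
    have hmem : ∀ e ∈ V, e ∈ f e • (⊤ : Submodule A E) := by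
      intro e _
      rw [hco]
      intro a ha
      rw [← hf] at ha
      exact Submodule.mem_annihilator.mp ha e (Submodule.mem_span_singleton_self e)
    refine ⟨⨆ e : (V : Set E), f e, le_antisymm ?_ ?_⟩
    · intro e heV
      have : f e • (⊤ : Submodule A E) ≤ (⨆ e : (V : Set E), f e) • ⊤ :=
        Submodule.smul_mono_left (le_iSup (fun e : (V : Set E) => f ((e : E))) ⟨e, heV⟩)
      exact this (hmem e heV)
    · rw [Submodule.smul_le]
      intro a ha m _
      refine Submodule.iSup_induction (motive := fun a => a • m ∈ V)
        (fun e : (V : Set E) => f (e : E)) ha ?_ ?_ ?_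
      · intro i x hx
        exact hsub i i.2 (Submodule.smul_mem_smul hx Submodule.mem_top)
      · show (0 : A) • m ∈ V
        rw [zero_smul]; exact V.zero_mem
      · intro x y hx hy
        show (x + y) • m ∈ V
        rw [add_smul]; exact V.add_mem hx hy
end

section
/- Let E be a second A-module that is also an annihilator multiplication module. Then E is a prime module, i.e., ann(e) = ann(E) for every nonzero e ∈ E (equivalently, ann(V) = ann(E) for every nonzero submodule V of E). Moreover, for every nonzero submodule V of E, V is a pure submodule of E if and only if V is a second submodule of E (i.e., for each a ∈ A, either aV = (0) or aV = V). -/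
open Pointwise

/-- Pointwise scalar multiple of a submodule is `⊥` iff the scalar annihilates it. -/
lemma pointwise_smul_eq_bot_iff_mem_annihilator {A : Type*} [CommRing A]
    {E : Type*} [AddCommGroup E] [Module A E] (a : A) (W : Submodule A E) :
    a • W = ⊥ ↔ a ∈ W.annihilator := by
  rw [Submodule.mem_annihilator]
  constructor
  · intro h x hx
    have : a • x ∈ a • W := Submodule.smul_mem_pointwise_smul x a W hx
    rw [h] at this
    simpa using this
  · intro h
    refine le_bot_iff.mp ?_
    intro y hy
    have : y ∈ a • (W : Set E) := hy
    obtain ⟨x, hx, rfl⟩ := this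
    simpa [h x hx] using Submodule.zero_mem (⊥ : Submodule A E)

/-- A second annihilator multiplication module `E` is a prime module
(`ann(e) = ann(E)` for nonzero `e`, equivalently `ann(V) = ann(E)` for nonzero `V`),
and its nonzero pure submodules coincide with its second submodules. -/
theorem second_isAnnMultiplication {A : Type*} [CommRing A] [Nontrivial A]
    {E : Type*} [AddCommGroup E] [Module A E] [Nontrivial E]
    (hsec : ∀ a : A, a • (⊤ : Submodule A E) = ⊥ ∨ a • (⊤ : Submodule A E) = ⊤)
    (hE : IsAnnMultiplication A E) :
    (∀ e : E, e ≠ 0 →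
      (Submodule.span A {e}).annihilator = (⊤ : Submodule A E).annihilator) ∧
    (∀ V : Submodule A E, V ≠ ⊥ →
      V.annihilator = (⊤ : Submodule A E).annihilator) ∧
    (∀ V : Submodule A E, V ≠ ⊥ →
      ((∀ I : Ideal A, (I • (⊤ : Submodule A E)) ⊓ V = I • V) ↔
        (∀ a : A, a • V = ⊥ ∨ a • V = V))) := by
  -- If every element of `I` kills `E`, then `I • ⊤ = ⊥`.
  have hIbot : ∀ I : Ideal A, (∀ a ∈ I, a • (⊤ : Submodule A E) = ⊥) →
      I • (⊤ : Submodule A E) = ⊥ := by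
    intro I h
    refine le_bot_iff.mp (Submodule.smul_le.mpr ?_)
    intro r hr n _
    have := (pointwise_smul_eq_bot_iff_mem_annihilator r ⊤).mp (h r hr)
    rw [Submodule.mem_annihilator] at this
    simpa using this n trivial
  -- `I • ⊤` is either `⊥` or `⊤`, and in the latter case some `a ∈ I` has `a • ⊤ = ⊤`.
  have hI : ∀ I : Ideal A, I • (⊤ : Submodule A E) = ⊥ ∨
      (I • (⊤ : Submodule A E) = ⊤ ∧ ∃ a ∈ I, a • (⊤ : Submodule A E) = ⊤) := by
    intro I
    by_cases h : ∃ a ∈ I, a • (⊤ : Submodule A E) = ⊤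
    · right
      obtain ⟨a, haI, ha⟩ := h
      refine ⟨le_antisymm le_top ?_, a, haI, ha⟩
      calc (⊤ : Submodule A E) = a • ⊤ := ha.symm
        _ = Ideal.span {a} • ⊤ := (Submodule.ideal_span_singleton_smul a ⊤).symm
        _ ≤ I • ⊤ := Submodule.smul_mono_left
              (by simpa [Ideal.span_le] using haI)
    · left
      push_neg at h
      exact hIbot I fun a ha => (hsec a).resolve_right (h a ha)
  have h1 : ∀ e : E, e ≠ 0 →
      (Submodule.span A {e}).annihilator = (⊤ : Submodule A E).annihilator := by
    intro e he
    obtain ⟨I, -, heq⟩ := hE e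
    rcases hI I with h | ⟨h, -⟩
    · exfalso
      rw [h, Submodule.annihilator_bot] at heq
      have h1' : (1 : A) ∈ (Submodule.span A {e}).annihilator := heq ▸ trivial
      rw [Submodule.mem_annihilator_span_singleton, one_smul] at h1'
      exact he h1'
    · rw [heq, h]
  have h2 : ∀ V : Submodule A E, V ≠ ⊥ →
      V.annihilator = (⊤ : Submodule A E).annihilator := by
    intro V hV
    obtain ⟨e, heV, he⟩ := (Submodule.ne_bot_iff V).mp hV
    refine le_antisymm ?_ (Submodule.annihilator_mono le_top)
    rw [← h1 e he]
    exact Submodule.annihilator_mono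
      ((Submodule.span_singleton_le_iff_mem e V).mpr heV)
  refine ⟨h1, h2, ?_⟩
  intro V hV
  constructor
  · intro hpure a
    rcases hsec a with h | h
    · left
      rw [pointwise_smul_eq_bot_iff_mem_annihilator, h2 V hV]
      exact (pointwise_smul_eq_bot_iff_mem_annihilator a ⊤).mp h
    · right
      have := hpure (Ideal.span {a})
      rw [Submodule.ideal_span_singleton_smul, Submodule.ideal_span_singleton_smul,
        h, top_inf_eq] at this
      exact this.symm
  · intro hsecV I
    rcases hI I with h | ⟨h, a, haI, ha⟩
    · rw [h, bot_inf_eq]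
      refine (le_bot_iff.mp ?_).symm
      calc I • V ≤ I • ⊤ := smul_mono_right I le_top
        _ = ⊥ := h
    · rw [h, top_inf_eq]
      have haV : a • V = V := by
        refine (hsecV a).resolve_left ?_
        rw [pointwise_smul_eq_bot_iff_mem_annihilator, h2 V hV,
          ← pointwise_smul_eq_bot_iff_mem_annihilator, ha]
        intro hbt
        exact absurd (hbt.symm.trans rfl) (by simpa using (bot_ne_top (α := Submodule A E)).symm)
      refine (le_antisymm ?_ ?_).symm
      · exact Submodule.smul_le.mpr fun r _ n hn => Submodule.smul_mem V r hn
      · calc V = a • V := haV.symm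
          _ = Ideal.span {a} • V := (Submodule.ideal_span_singleton_smul a V).symm
          _ ≤ I • V := Submodule.smul_mono_left (by simpa [Ideal.span_le] using haI)
end

section
/- For a commutative ring A, the following statements are equivalent: (i) A is a reduced ring and every faithful A-module is an annihilator multiplication module; (ii) A is a principal ideal ring and a von Neumann regular ring; (iii) A is isomorphic as a ring to a direct product of finitely many fields. -/
universe u

section Aux

variable {A : Type*} [CommRing A]

/-- In a von Neumann regular ring, squares detect zero. -/
lemma vnr_sq_zero (h : ∀ a : A, ∃ x : A, a = a * x * a) {a : A} (ha : a * a = 0) :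
    a = 0 := by
  obtain ⟨x, hx⟩ := h a
  calc a = a * x * a := hx
  _ = x * (a * a) := by ring
  _ = 0 := by rw [ha, mul_zero]

lemma vnr_isReduced (h : ∀ a : A, ∃ x : A, a = a * x * a) : IsReduced A := by
  constructor
  intro a ⟨n, hn⟩
  obtain ⟨x, hx⟩ := h a
  have key : ∀ k : ℕ, a = a * (x * a) ^ k := by
    intro k
    induction k with
    | zero => simp
    | succ k ih =>
      have h2 : a * (x * a) ^ (k + 1) = (a * (x * a) ^ k) * (x * a) := by ring
      rw [← ih] at h2
      rw [h2]
      linear_combination hx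
  calc a = a * (x * a) ^ n := key n
  _ = a * x ^ n * a ^ n := by rw [mul_pow]; ring
  _ = a * x ^ n * 0 := by rw [hn]
  _ = 0 := by ring

/-- In a von Neumann regular ring, each principal ideal is generated by an idempotent. -/
lemma vnr_span_singleton_idem (h : ∀ a : A, ∃ x : A, a = a * x * a) (a : A) :
    ∃ ε : A, ε * ε = ε ∧ Ideal.span {a} = Ideal.span {ε} := by
  obtain ⟨x, hx⟩ := h a
  refine ⟨a * x, by linear_combination x * hx.symm, le_antisymm ?_ ?_⟩
  · rw [Ideal.span_singleton_le_span_singleton]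
    exact ⟨a, by linear_combination hx⟩
  · rw [Ideal.span_singleton_le_span_singleton]
    exact ⟨x, by ring⟩

/-- In a von Neumann regular ring, each finitely generated ideal is generated by an
idempotent. -/
lemma vnr_fg_idem (h : ∀ a : A, ∃ x : A, a = a * x * a) {I : Ideal A} (hI : I.FG) :
    ∃ ε : A, ε * ε = ε ∧ I = Ideal.span {ε} := by
  refine Submodule.fg_induction
    (motive := fun (J : Ideal A) _ => ∃ ε : A, ε * ε = ε ∧ J = Ideal.span {ε}) ?_ ?_ I hI
  · intro a
    obtain ⟨ε, h1, h2⟩ := vnr_span_singleton_idem h a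
    exact ⟨ε, h1, h2⟩
  · rintro J₁ J₂ - - ⟨e, he, rfl⟩ ⟨f, hf, rfl⟩
    refine ⟨e + f - e * f, by linear_combination (1 - f) * he + (e*e - 2*e + 1) * hf, le_antisymm ?_ ?_⟩
    · refine sup_le ?_ ?_ <;> rw [Ideal.span_singleton_le_span_singleton]
      · exact ⟨e, by linear_combination (f - 1) * he⟩
      · exact ⟨f, by linear_combination (e - 1) * hf⟩
    · rw [Ideal.span_le, Set.singleton_subset_iff, SetLike.mem_coe]
      have h1 : e ∈ Ideal.span {e} ⊔ Ideal.span {f} :=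
        le_sup_left (α := Ideal A) (Ideal.subset_span rfl)
      have h2 : f - e * f ∈ Ideal.span {e} ⊔ Ideal.span {f} := by
        refine le_sup_right (α := Ideal A) ?_
        rw [Ideal.mem_span_singleton]
        exact ⟨1 - e, by ring⟩
      have := Submodule.add_mem _ h1 h2
      convert this using 1
      ring

end Aux

section Test

variable {A : Type u} [CommRing A]

/-- The test module `A × A ⧸ I` is faithful. -/
lemma faithful_test (I : Ideal A) :
    (⊤ : Submodule A (A × (A ⧸ I))).annihilator = ⊥ := by
  rw [eq_bot_iff]
  intro b hb
  have h := Submodule.mem_annihilator.mp hb ((1 : A), (0 : A ⧸ I)) Submodule.mem_top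
  rw [Prod.smul_mk, smul_eq_mul, mul_one, smul_zero] at h
  rw [Submodule.mem_bot]
  exact (Prod.mk_eq_zero.mp h).1

lemma smul_test (I : Ideal A) (b : A) :
    b • (((0 : A), Submodule.Quotient.mk 1) : A × (A ⧸ I))
      = ((0 : A), Submodule.Quotient.mk b) := by
  rw [Prod.smul_mk, smul_zero, ← Submodule.Quotient.mk_smul, smul_eq_mul, mul_one]

/-- The annihilator of the span of the test element `(0, 1 + I)` is `I`. -/
lemma ann_span_test (I : Ideal A) :
    (Submodule.span A {(((0 : A), Submodule.Quotient.mk 1) : A × (A ⧸ I))}).annihilator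
      = I := by
  ext b
  rw [Submodule.mem_annihilator_span_singleton, smul_test, Prod.mk_eq_zero]
  simp [Submodule.Quotient.mk_eq_zero, Ideal.Quotient.eq_zero_iff_mem]

end Test

/-- For a commutative ring `A` the following are equivalent: (i) `A` is reduced and
every faithful `A`-module is an annihilator multiplication module; (ii) `A` is a
principal ideal von Neumann regular ring; (iii) `A` is a finite direct product of
fields. -/
theorem reduced_annMult_iff_pir_vnr_iff_product_of_fields {A : Type u} [CommRing A]
    [Nontrivial A] :
    ((IsReduced A ∧ ∀ (E : Type u) [AddCommGroup E] [Module A E],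
        (⊤ : Submodule A E).annihilator = ⊥ → IsAnnMultiplication A E) ↔
      (IsPrincipalIdealRing A ∧ ∀ a : A, ∃ x : A, a = a * x * a)) ∧
    ((IsPrincipalIdealRing A ∧ ∀ a : A, ∃ x : A, a = a * x * a) ↔
      ∃ (n : ℕ) (K : Fin n → Type u) (_ : ∀ i, Field (K i)),
        Nonempty (A ≃+* ∀ i, K i)) := by
  constructor
  · constructor
    · -- (i) → (ii)
      rintro ⟨hred, hann⟩
      have hvnr : ∀ a : A, ∃ x : A, a = a * x * a := by
        intro a
        obtain ⟨J, hJfg, hJ⟩ := hann (A × (A ⧸ Ideal.span {a * a})) (faithful_test _)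
          ((0 : A), Submodule.Quotient.mk 1)
        rw [ann_span_test] at hJ
        have ha2 : a * a ∈ (J • (⊤ : Submodule A (A × (A ⧸ Ideal.span {a * a})))).annihilator := by
          rw [← hJ]; exact Ideal.subset_span rfl
        have hj0 : ∀ j ∈ J, a * j = 0 := by
          intro j hj
          have hmem : (j * j) • (((1 : A), (0 : A ⧸ Ideal.span {a * a})))
              ∈ J • (⊤ : Submodule A (A × (A ⧸ Ideal.span {a * a}))) :=
            Submodule.smul_mem_smul (J.mul_mem_left j hj) Submodule.mem_top
          have h1 := Submodule.mem_annihilator.mp ha2 _ hmem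
          rw [smul_smul, Prod.smul_mk, smul_eq_mul, mul_one, smul_zero] at h1
          have h2 : a * a * (j * j) = 0 := (Prod.mk_eq_zero.mp h1).1
          have h3 : (a * j) * (a * j) = 0 := by linear_combination h2
          exact IsNilpotent.eq_zero ⟨2, by rw [pow_two]; exact h3⟩
        have haann : a ∈ (J • (⊤ : Submodule A (A × (A ⧸ Ideal.span {a * a})))).annihilator := by
          rw [Submodule.mem_annihilator]
          intro m hm
          refine Submodule.smul_induction_on hm ?_ ?_
          · intro r hr x _
            rw [smul_smul, hj0 r hr, zero_smul]
          · intro x y hx hy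
            rw [smul_add, hx, hy, add_zero]
        rw [← hJ, Ideal.mem_span_singleton] at haann
        obtain ⟨c, hc⟩ := haann
        exact ⟨c, by linear_combination hc⟩
      refine ⟨⟨fun I => ?_⟩, hvnr⟩
      obtain ⟨J, hJfg, hJ⟩ := hann (A × (A ⧸ I)) (faithful_test _)
        ((0 : A), Submodule.Quotient.mk 1)
      rw [ann_span_test] at hJ
      obtain ⟨ε, hε, rfl⟩ := vnr_fg_idem hvnr hJfg
      refine ⟨1 - ε, le_antisymm ?_ ?_⟩
      · -- I ≤ span {1 - ε}
        intro b hb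
        rw [hJ, Submodule.mem_annihilator] at hb
        have hmem : ε • (((1 : A), (0 : A ⧸ I)))
            ∈ Ideal.span {ε} • (⊤ : Submodule A (A × (A ⧸ I))) :=
          Submodule.smul_mem_smul (Ideal.subset_span rfl) Submodule.mem_top
        have h1 := hb _ hmem
        rw [smul_smul, Prod.smul_mk, smul_eq_mul, mul_one, smul_zero] at h1
        have hbe : b * ε = 0 := (Prod.mk_eq_zero.mp h1).1
        rw [Ideal.submodule_span_eq, Ideal.mem_span_singleton]
        exact ⟨b, by linear_combination hbe⟩
      · -- span {1 - ε} ≤ I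
        rw [Ideal.submodule_span_eq, Ideal.span_le, Set.singleton_subset_iff, SetLike.mem_coe,
          hJ, Submodule.mem_annihilator]
        intro m hm
        refine Submodule.smul_induction_on hm ?_ ?_
        · intro r hr x _
          rw [Ideal.mem_span_singleton] at hr
          obtain ⟨c, rfl⟩ := hr
          have h0 : (1 - ε) * (ε * c) = 0 := by linear_combination (-c) * hε
          rw [smul_smul, h0, zero_smul]
        · intro x y hx hy
          rw [smul_add, hx, hy, add_zero]
    · -- (ii) → (i)
      rintro ⟨hpir, hvnr⟩
      refine ⟨vnr_isReduced hvnr, ?_⟩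
      intro E _ _ hfaith e
      obtain ⟨g, hg⟩ := (hpir.principal ((Submodule.span A {e}).annihilator)).principal
      obtain ⟨ε, hε, hgε⟩ := vnr_span_singleton_idem hvnr g
      have hann : (Submodule.span A {e}).annihilator = Ideal.span {ε} := by
        rw [hg, Ideal.submodule_span_eq, hgε]
      refine ⟨Ideal.span {1 - ε}, ⟨{1 - ε}, by simp⟩, ?_⟩
      rw [hann]
      apply le_antisymm
      · rw [Ideal.span_le, Set.singleton_subset_iff, SetLike.mem_coe,
          Submodule.mem_annihilator]
        intro m hm
        refine Submodule.smul_induction_on hm ?_ ?_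
        · intro r hr x _
          rw [Ideal.mem_span_singleton] at hr
          obtain ⟨c, rfl⟩ := hr
          have h0 : ε * ((1 - ε) * c) = 0 := by linear_combination (-c) * hε
          rw [smul_smul, h0, zero_smul]
        · intro x y hx hy
          rw [smul_add, hx, hy, add_zero]
      · intro b hb
        rw [Submodule.mem_annihilator] at hb
        have hbe : b * (1 - ε) ∈ (⊤ : Submodule A E).annihilator := by
          rw [Submodule.mem_annihilator]
          intro x _
          have hmem : (1 - ε) • x ∈ Ideal.span {1 - ε} • (⊤ : Submodule A E) :=
            Submodule.smul_mem_smul (Ideal.subset_span rfl) Submodule.mem_top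
          have h1 := hb _ hmem
          rwa [smul_smul] at h1
        rw [hfaith, Submodule.mem_bot] at hbe
        rw [Ideal.mem_span_singleton]
        exact ⟨b, by linear_combination hbe⟩
  · constructor
    · -- (ii) → (iii)
      rintro ⟨hpir, hvnr⟩
      haveI := hpir
      haveI : IsReduced A := vnr_isReduced hvnr
      have hidem : ∀ I : Ideal A, ∃ ε : A, ε * ε = ε ∧ I = Ideal.span {ε} := by
        intro I
        obtain ⟨g, hg⟩ := (hpir.principal I).principal
        obtain ⟨ε, hε, hgε⟩ := vnr_span_singleton_idem hvnr g
        exact ⟨ε, hε, by rw [hg, Ideal.submodule_span_eq, hgε]⟩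
      have hannspan : ∀ ε : A, ε * ε = ε →
          (Ideal.span {ε} : Ideal A).annihilator = Ideal.span {1 - ε} := by
        intro ε hε
        ext b
        rw [← Ideal.submodule_span_eq, Submodule.mem_annihilator_span_singleton, smul_eq_mul,
          Ideal.mem_span_singleton]
        constructor
        · intro hb
          exact ⟨b, by linear_combination hb⟩
        · rintro ⟨c, rfl⟩
          linear_combination (-c) * hε
      have hdouble : ∀ I : Ideal A, I.annihilator.annihilator = I := by
        intro I
        obtain ⟨ε, hε, rfl⟩ := hidem I
        rw [hannspan ε hε, hannspan (1 - ε) (by linear_combination hε), sub_sub_cancel]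
      haveI : IsArtinianRing A := by
        refine (isArtinian_iff A A).mpr ?_
        have hwf : WellFounded ((· > ·) : Ideal A → Ideal A → Prop) :=
          isNoetherian_iff.mp inferInstance
        refine Subrelation.wf ?_ (InvImage.wf (fun I : Ideal A => I.annihilator) hwf)
        intro I J hIJ
        have hmono : J.annihilator ≤ I.annihilator := Submodule.annihilator_mono hIJ.le
        refine lt_of_le_of_ne hmono ?_
        intro heq
        exact hIJ.ne (by
          have heq' : J.annihilator = I.annihilator := heq
          rw [← hdouble I, ← hdouble J, heq'])
      haveI : Finite (MaximalSpectrum A) := inferInstance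
      letI : Fintype (MaximalSpectrum A) := Fintype.ofFinite _
      classical
      refine ⟨Fintype.card (MaximalSpectrum A),
        fun i => A ⧸ ((Fintype.equivFin (MaximalSpectrum A)).symm i).asIdeal,
        fun i => IsArtinianRing.fieldOfSubtypeIsMaximal A _, ⟨?_⟩⟩
      exact (IsArtinianRing.equivPi A).toRingEquiv.trans
        (RingEquiv.piCongrLeft' (fun I : MaximalSpectrum A => A ⧸ I.asIdeal)
          (Fintype.equivFin (MaximalSpectrum A)))
    · -- (iii) → (ii)
      rintro ⟨n, K, hK, ⟨φ⟩⟩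
      letI := hK
      constructor
      · haveI : IsPrincipalIdealRing (∀ i, K i) := inferInstance
        exact IsPrincipalIdealRing.of_surjective (φ.symm : (∀ i, K i) →+* A)
          φ.symm.surjective
      · intro a
        refine ⟨φ.symm (fun i => (φ a i)⁻¹), ?_⟩
        apply φ.injective
        rw [map_mul, map_mul, RingEquiv.apply_symm_apply]
        funext i
        simp only [Pi.mul_apply]
        rcases eq_or_ne (φ a i) 0 with h | h
        · rw [h]; ring
        · rw [mul_inv_cancel₀ h, one_mul]
end

section
/- Let E be an A-module. (i) If E is an annihilator multiplication module and faithful, then Ass_A(E) ⊆ Ass(A). (ii) If E is a non-torsion annihilator multiplication module, then Ass(A) = Ass_A(E). -/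
/-- For a faithful module, the annihilator of `I • ⊤` is the annihilator of `I`. -/
lemma annihilator_smul_top_of_faithful {A : Type*} [CommRing A] {E : Type*}
    [AddCommGroup E] [Module A E] (hf : (⊤ : Submodule A E).annihilator = ⊥)
    (I : Ideal A) :
    (I • (⊤ : Submodule A E)).annihilator = (I : Submodule A A).annihilator := by
  ext r
  simp only [Submodule.mem_annihilator]
  constructor
  · intro h i hi
    have : r * i ∈ (⊤ : Submodule A E).annihilator := by
      rw [Submodule.mem_annihilator]
      intro m _
      have : (r * i) • m = r • (i • m) := by rw [mul_smul]
      rw [this]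
      exact h _ (Submodule.smul_mem_smul hi Submodule.mem_top)
    rw [hf, Submodule.mem_bot] at this
    simpa using this
  · intro h n hn
    refine Submodule.smul_induction_on hn ?_ ?_
    · intro i hi m _
      rw [← mul_smul]
      have : r * i = 0 := by simpa using h i hi
      rw [this, zero_smul]
    · intro x y hx hy
      rw [smul_add, hx, hy, add_zero]

lemma prime_eq_ann_singleton {A : Type*} [CommRing A] {s : Finset A} {P : Ideal A}
    (hP : P.IsPrime)
    (heq : P = (Submodule.span A (s : Set A)).annihilator) :
    ∃ x ∈ s, P = (Submodule.span A {x}).annihilator := by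
  have hle : ∀ x ∈ s, P ≤ (Submodule.span A {x}).annihilator := by
    intro x hx
    rw [heq]
    exact Submodule.annihilator_mono (Submodule.span_mono (by simpa using hx))
  classical
  by_contra h
  push_neg at h
  have key : ∀ x : A, ∃ r : A, x ∈ s → (r * x = 0 ∧ r ∉ P) := by
    intro x
    by_cases hx : x ∈ s
    · have hne := h x hx
      have hlt : P < (Submodule.span A {x}).annihilator := lt_of_le_of_ne (hle x hx) hne
      obtain ⟨r, hr1, hr2⟩ := SetLike.exists_of_lt hlt
      refine ⟨r, fun _ => ⟨?_, hr2⟩⟩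
      have := (Submodule.mem_annihilator_span_singleton x r).mp hr1
      simpa using this
    · exact ⟨1, fun h' => absurd h' hx⟩
  choose r hr using key
  have hprod : s.prod r ∈ P := by
    rw [heq, Submodule.mem_annihilator]
    intro n hn
    refine Submodule.span_induction ?_ ?_ ?_ ?_ hn
    · intro x hx
      have hx' : x ∈ s := hx
      rw [smul_eq_mul, ← Finset.mul_prod_erase s r hx', mul_comm (r x), mul_assoc,
        (hr x hx').1, mul_zero]
    · simp
    · intro a b _ _ ha hb; rw [smul_add, ha, hb, add_zero]
    · intro a b _ hb; rw [smul_comm, hb, smul_zero]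
  haveI := hP
  obtain ⟨x, hx, hxP⟩ := Ideal.IsPrime.prod_mem_iff.mp hprod
  exact (hr x hx).2 hxP

lemma prime_eq_rad_ann_singleton {A : Type*} [CommRing A] {s : Finset A} {P : Ideal A}
    (hP : P.IsPrime)
    (heq : P = (Submodule.span A (s : Set A)).annihilator.radical) :
    ∃ x ∈ s, P = (Submodule.span A {x}).annihilator.radical := by
  have hle : ∀ x ∈ s, P ≤ (Submodule.span A {x}).annihilator.radical := by
    intro x hx
    rw [heq]
    exact Ideal.radical_mono (Submodule.annihilator_mono (Submodule.span_mono (by simpa using hx)))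
  classical
  by_contra h
  push_neg at h
  have key : ∀ x : A, ∃ r : A, x ∈ s → (r * x = 0 ∧ r ∉ P) := by
    intro x
    by_cases hx : x ∈ s
    · have hne := h x hx
      have hlt : P < (Submodule.span A {x}).annihilator.radical := lt_of_le_of_ne (hle x hx) hne
      obtain ⟨r, hr1, hr2⟩ := SetLike.exists_of_lt hlt
      obtain ⟨n, hn⟩ := hr1
      refine ⟨r ^ n, fun _ => ⟨?_, fun h' => hr2 (hP.mem_of_pow_mem n h')⟩⟩
      have := (Submodule.mem_annihilator_span_singleton x (r ^ n)).mp hn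
      simpa using this
    · exact ⟨1, fun h' => absurd h' hx⟩
  choose r hr using key
  have hprod : s.prod r ∈ P := by
    rw [heq]
    apply Ideal.le_radical
    rw [Submodule.mem_annihilator]
    intro n hn
    refine Submodule.span_induction ?_ ?_ ?_ ?_ hn
    · intro x hx
      have hx' : x ∈ s := hx
      rw [smul_eq_mul, ← Finset.mul_prod_erase s r hx', mul_comm (r x), mul_assoc,
        (hr x hx').1, mul_zero]
    · simp
    · intro a b _ _ ha hb; rw [smul_add, ha, hb, add_zero]
    · intro a b _ hb; rw [smul_comm, hb, smul_zero]
  haveI := hP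
  obtain ⟨x, hx, hxP⟩ := Ideal.IsPrime.prod_mem_iff.mp hprod
  exact (hr x hx).2 hxP

/-- (i) If `E` is a faithful annihilator multiplication module then
`Ass_A(E) ⊆ Ass(A)`. (ii) If `E` is a non-torsion annihilator multiplication module
then `Ass(A) = Ass_A(E)`. -/
theorem associatedPrimes_of_isAnnMultiplication {A : Type*} [CommRing A] [Nontrivial A]
    {E : Type*} [AddCommGroup E] [Module A E] [Nontrivial E] :
    ((IsAnnMultiplication A E ∧ (⊤ : Submodule A E).annihilator = ⊥) →
      associatedPrimes A E ⊆ associatedPrimes A A) ∧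
    ((IsAnnMultiplication A E ∧ ∃ e : E, (Submodule.span A {e}).annihilator = ⊥) →
      associatedPrimes A A = associatedPrimes A E) := by
  have part1 : (IsAnnMultiplication A E ∧ (⊤ : Submodule A E).annihilator = ⊥) →
      associatedPrimes A E ⊆ associatedPrimes A A := by
    rintro ⟨ham, hf⟩ P ⟨hP, e, he⟩
    obtain ⟨I, ⟨s, hs⟩, hI⟩ := ham e
    have heq : P = (Submodule.span A (s : Set A)).annihilator.radical := by
      rw [he, Submodule.bot_colon', hI, annihilator_smul_top_of_faithful hf, ← hs]
    obtain ⟨x, _, hx⟩ := prime_eq_rad_ann_singleton hP heq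
    exact ⟨hP, x, by rw [Submodule.bot_colon']; exact hx⟩
  refine ⟨part1, ?_⟩
  rintro ⟨ham, e, he⟩
  have hf : (⊤ : Submodule A E).annihilator = ⊥ := by
    rw [← le_bot_iff, ← he]
    exact Submodule.annihilator_mono le_top
  apply Set.Subset.antisymm
  · rintro P ⟨hP, a, ha⟩
    refine ⟨hP, a • e, ?_⟩
    rw [ha, Submodule.bot_colon', Submodule.bot_colon']
    congr 1
    ext r
    rw [Submodule.mem_annihilator_span_singleton,
      Submodule.mem_annihilator_span_singleton, smul_eq_mul, ← mul_smul]
    constructor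
    · intro h; rw [h, zero_smul]
    · intro h
      have : r * a ∈ (Submodule.span A {e}).annihilator :=
        (Submodule.mem_annihilator_span_singleton e (r * a)).mpr h
      rw [he, Submodule.mem_bot] at this
      exact this
  · exact part1 ⟨ham, hf⟩
end
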